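/- Let n ≡ 1 (mod 4) be prime and consider the linearization of the Kuramoto model on the Paley graph P_n about the synchronous (0-twisted) state u_n^{(0)}. Then λ_0(0) = 0, and for every x ∈ Z_n \ {0}, λ_x(0) = (−1)^{α+1} · (2π/(n−1)) · (n − G_n(x)); in particular, for attractive coupling (α = 0) every λ_x(0), x ≠ 0, is strictly negative, while for repulsive coupling (α = 1) every λ_x(0), x ≠ 0, is strictly positive (Lemma 6.1, case q = 0). -/

import Mathlib

open Complex
noncomputable def psi (n : ℕ) (a : ZMod n) : ℂ :=
  Complex.exp (2 * Real.pi * Complex.I * ((a.val : ℕ) : ℂ) / n)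

lemma psi_natCast (n : ℕ) [NeZero n] (m : ℕ) :
    Complex.exp (2 * Real.pi * Complex.I * (m : ℂ) / n) = psi n (m : ZMod n) := by
  have hn : (n : ℂ) ≠ 0 := by exact_mod_cast (NeZero.ne n)
  have hv : ((m : ZMod n)).val = m % n := ZMod.val_natCast n m
  rw [psi, hv]
  have hm : (m : ℂ) = ((m % n : ℕ) : ℂ) + ((m / n : ℕ) : ℂ) * n := by
    exact_mod_cast congrArg (Nat.cast : ℕ → ℂ) (Nat.mod_add_div' m n).symm
  rw [hm]
  have h2 : 2 * (Real.pi:ℂ) * Complex.I * (((m % n : ℕ):ℂ) + ((m / n : ℕ):ℂ) * n) / n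
      = 2 * Real.pi * Complex.I * ((m % n : ℕ):ℂ) / n + (((m / n : ℕ) : ℤ) : ℂ) * (2 * Real.pi * Complex.I) := by
    have : (((m / n : ℕ) : ℤ) : ℂ) = ((m / n : ℕ) : ℂ) := by norm_cast
    rw [this]; field_simp
  rw [h2, Complex.exp_add, Complex.exp_int_mul_two_pi_mul_I, mul_one]

lemma psi_add (n : ℕ) [NeZero n] (a b : ZMod n) : psi n (a + b) = psi n a * psi n b := by
  have h1 : psi n a * psi n b
      = Complex.exp (2 * Real.pi * Complex.I * ((a.val + b.val : ℕ) : ℂ) / n) := by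
    rw [psi, psi, ← Complex.exp_add]
    congr 1
    push_cast
    ring
  have h2 : ((a.val + b.val : ℕ) : ZMod n) = a + b := by
    push_cast [ZMod.natCast_val, ZMod.cast_id]
    ring
  rw [h1, psi_natCast, h2]

lemma psi_zero (n : ℕ) [NeZero n] : psi n 0 = 1 := by simp [psi]

lemma abs_psi (n : ℕ) (a : ZMod n) : ‖psi n a‖ = 1 := by
  rw [psi, Complex.norm_exp]; norm_num

lemma conj_psi (n : ℕ) [NeZero n] (a : ZMod n) :
    (starRingEnd ℂ) (psi n a) = psi n (-a) := by
  have h1 : psi n a * psi n (-a) = 1 := by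
    rw [← psi_add]; simp [psi_zero]
  have h2 : (starRingEnd ℂ) (psi n a) * psi n a = 1 := by
    rw [mul_comm, Complex.mul_conj]
    norm_cast
    rw [← Complex.sq_norm, abs_psi]
    norm_num
  calc (starRingEnd ℂ) (psi n a)
      = (starRingEnd ℂ) (psi n a) * (psi n a * psi n (-a)) := by rw [h1, mul_one]
    _ = ((starRingEnd ℂ) (psi n a) * psi n a) * psi n (-a) := by ring
    _ = psi n (-a) := by rw [h2, one_mul]

lemma psi_ne_one (n : ℕ) [NeZero n] (a : ZMod n) (ha : a ≠ 0) : psi n a ≠ 1 := by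
  rw [psi]
  intro h
  rw [Complex.exp_eq_one_iff] at h
  obtain ⟨k, hk⟩ := h
  have hn : (n : ℂ) ≠ 0 := by exact_mod_cast (NeZero.ne n)
  have h2πI : (2 * (Real.pi:ℂ) * Complex.I) ≠ 0 := by
    simp [Complex.I_ne_zero, Real.pi_ne_zero]
  have hval : ((a.val : ℕ) : ℂ) = (k : ℂ) * n := by
    field_simp at hk
    linear_combination hk
  have hint : ((a.val : ℕ) : ℤ) = k * n := by exact_mod_cast hval
  have h0 : 0 < a.val := Nat.pos_of_ne_zero (fun h => ha (by rwa [ZMod.val_eq_zero] at h))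
  have h1 : a.val < n := ZMod.val_lt a
  have hn0 : 0 < (n:ℤ) := by exact_mod_cast Nat.pos_of_ne_zero (NeZero.ne n)
  have h0' : 0 < ((a.val:ℕ):ℤ) := by exact_mod_cast h0
  have h1' : ((a.val:ℕ):ℤ) < n := by exact_mod_cast h1
  rcases le_or_gt k 0 with hk0 | hk0
  · nlinarith
  · have : 1 ≤ k := hk0
    nlinarith
lemma sum_range_zmod (n : ℕ) [NeZero n] (f : ZMod n → ℂ) :
    ∑ k ∈ Finset.range n, f (k : ZMod n) = ∑ k : ZMod n, f k := by
  refine Finset.sum_nbij' (fun k => (k : ZMod n)) (fun a => a.val) ?_ ?_ ?_ ?_ ?_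
  · intro a _; exact Finset.mem_univ _
  · intro a _; exact Finset.mem_range.mpr (ZMod.val_lt a)
  · intro a ha; exact ZMod.val_natCast_of_lt (Finset.mem_range.mp ha)
  · intro a _; simp [ZMod.natCast_val, ZMod.cast_id]
  · intro a _; rfl


lemma re_lt_one_of_ne_one (z : ℂ) (h1 : ‖z‖ = 1) (h2 : z ≠ 1) : z.re < 1 := by
  rcases lt_or_eq_of_le ((Complex.re_le_norm z).trans_eq h1) with h | h
  · exact h
  · exfalso
    apply h2
    have hsq : z.re ^ 2 + z.im ^ 2 = 1 := by
      have h3 := Complex.sq_norm z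
      rw [h1] at h3
      rw [Complex.normSq_apply] at h3
      nlinarith [h3]
    have him : z.im = 0 := by nlinarith
    exact Complex.ext (by simp [h]) (by simp [him])



/-- Lemma 6.1, case q = 0: for the linearization of the Kuramoto model on
the Paley graph `P_n` about the synchronous state, `λ_0(0) = 0` and for `x ≠ 0`,
`λ_x(0) = (-1)^{α+1}·(2π/(n-1))·(n - G_n(x))`; for attractive coupling each such
eigenvalue is strictly negative, for repulsive coupling strictly positive. -/
theorem paley_linearization_about_synchronous_state
    (n : ℕ) (hp : n.Prime) (h4 : n % 4 = 1) [NeZero n]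
    (α : ℕ) (hα : α = 0 ∨ α = 1)
    (Q : Finset (ZMod n))
    (hQ : ∀ a : ZMod n, a ∈ Q ↔ (a ≠ 0 ∧ ∃ x : ZMod n, x ^ 2 = a))
    (hcard : (Q.card : ℝ) = ((n : ℝ) - 1) / 2)
    (deltaS : ZMod n → ℂ)
    (hdelta : ∀ x : ZMod n, deltaS x =
      if x ∈ Q then ((((-1 : ℝ) ^ α * 2 * Real.pi / Q.card) : ℝ) : ℂ) else 0)
    (B : (ZMod n → ℂ) → (ZMod n → ℂ))
    (hB : ∀ (η : ZMod n → ℂ) (x : ZMod n),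
      B η x = (∑ y : ZMod n, deltaS y * η (x - y)) - (∑ y ∈ Q, deltaS y) * η x)
    (e : ZMod n → ZMod n → ℂ)
    (he : ∀ x y : ZMod n,
      e x y = Complex.exp (2 * Real.pi * Complex.I * ((x.val * y.val : ℕ) : ℂ) / n))
    (G : ZMod n → ℂ)
    (hG : ∀ x : ZMod n, G x = ∑ k ∈ Finset.range n,
      Complex.exp (2 * Real.pi * Complex.I * ((x.val * k ^ 2 : ℕ) : ℂ) / n)) :
    ∃ lam : ZMod n → ℝ,
      (∀ x : ZMod n, B (e x) = ((lam x : ℝ) : ℂ) • e x) ∧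
      lam 0 = 0 ∧
      (∀ x : ZMod n, x ≠ 0 →
        ((lam x : ℝ) : ℂ)
            = (((-1 : ℝ) ^ (α + 1) * (2 * Real.pi / ((n : ℝ) - 1)) : ℝ) : ℂ) * ((n : ℂ) - G x) ∧
        (α = 0 → lam x < 0) ∧
        (α = 1 → 0 < lam x)) := by
  haveI : Fact n.Prime := ⟨hp⟩
  have hn5 : 5 ≤ n := by have := hp.two_le; omega
  -- Q is symmetric
  have hneg : ∀ a : ZMod n, a ∈ Q → -a ∈ Q := by
    obtain ⟨i, hi⟩ := (ZMod.exists_sq_eq_neg_one_iff (p := n)).mpr (by omega)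
    intro a ha
    rw [hQ] at ha ⊢
    obtain ⟨ha0, x, hx⟩ := ha
    refine ⟨neg_ne_zero.mpr ha0, i * x, ?_⟩
    have hi2 : i ^ 2 = -1 := by rw [sq]; exact hi.symm
    calc (i * x) ^ 2 = i ^ 2 * x ^ 2 := by ring
      _ = -a := by rw [hi2, hx]; ring
  have himg : Q.image (fun y => -y) = Q := by
    ext a
    simp only [Finset.mem_image]
    constructor
    · rintro ⟨b, hb, rfl⟩; exact hneg b hb
    · intro ha; exact ⟨-a, hneg a ha, neg_neg a⟩
  have hsumneg : ∀ f : ZMod n → ℂ, ∑ y ∈ Q, f (-y) = ∑ y ∈ Q, f y := by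
    intro f
    conv_rhs => rw [← himg]
    rw [Finset.sum_image (fun x _ y _ h => neg_injective h)]
  -- the character sum S
  set S : ZMod n → ℂ := fun x => ∑ y ∈ Q, psi n (x * y) with hSdef
  have hSconj : ∀ x, (starRingEnd ℂ) (S x) = S x := by
    intro x
    rw [hSdef]
    simp only [map_sum, conj_psi, ← mul_neg]
    exact hsumneg (fun y => psi n (x * y))
  have hSre : ∀ x, ((S x).re : ℂ) = S x := fun x => Complex.conj_eq_iff_re.mp (hSconj x)
  have he' : ∀ x y : ZMod n, e x y = psi n (x * y) := by
    intro x y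
    rw [he, psi_natCast]
    congr 1
    push_cast [ZMod.natCast_val, ZMod.cast_id]
    ring
  have hnR : (5:ℝ) ≤ (n:ℝ) := by exact_mod_cast hn5
  have hQpos : (0:ℝ) < Q.card := by rw [hcard]; linarith
  set c : ℝ := (-1:ℝ) ^ α * 2 * Real.pi / Q.card with hc
  have hlamc : ∀ x : ZMod n, ((c * ((S x).re - Q.card) : ℝ) : ℂ)
      = (c : ℂ) * (S x - Q.card) := by
    intro x
    push_cast
    rw [hSre x]
  refine ⟨fun x => c * ((S x).re - Q.card), ?_, ?_, ?_⟩
  · -- eigenvector equation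
    intro x
    funext z
    rw [hB]
    have h1 : ∑ y : ZMod n, deltaS y * e x (z - y) = (c : ℂ) * (psi n (x * z) * S x) := by
      simp only [hdelta, he', ite_mul, zero_mul]
      rw [Finset.sum_ite_mem, Finset.univ_inter]
      have hterm : ∀ y ∈ Q, (c : ℂ) * psi n (x * (z - y))
          = (c : ℂ) * psi n (x * z) * psi n (x * (-y)) := by
        intro y _
        rw [show x * (z - y) = x * z + x * (-y) by ring, psi_add]
        ring
      rw [Finset.sum_congr rfl hterm, ← Finset.mul_sum,
        hsumneg (fun y => psi n (x * y))]
      ring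
    have h2 : ∑ y ∈ Q, deltaS y = (c : ℂ) * Q.card := by
      rw [Finset.sum_congr rfl (fun y hy => by rw [hdelta y, if_pos hy]),
        Finset.sum_const, nsmul_eq_mul]
      ring
    rw [h1, h2, Pi.smul_apply, smul_eq_mul, he', hlamc]
    ring
  · -- lam 0 = 0
    have hS0 : S 0 = (Q.card : ℂ) := by
      rw [hSdef]
      simp [psi_zero]
    have h0 : (S 0).re = (Q.card : ℝ) := by rw [hS0]; simp
    show c * ((S 0).re - (Q.card : ℝ)) = 0
    rw [h0]
    ring
  · -- x ≠ 0
    intro x hx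
    -- Gauss sum identity G x = 1 + 2 S x
    have hG' : ∀ w : ZMod n, G w = ∑ k : ZMod n, psi n (w * k ^ 2) := by
      intro w
      rw [hG, ← sum_range_zmod n (fun k => psi n (w * k ^ 2))]
      apply Finset.sum_congr rfl
      intro k _
      rw [psi_natCast]
      congr 1
      push_cast [ZMod.natCast_val, ZMod.cast_id]
      try ring
    have h0Q : (0 : ZMod n) ∉ Q := by simp [hQ]
    have h2ne : (2 : ZMod n) ≠ 0 := by
      intro h
      have : (n : ℕ) ∣ 2 := by
        have := (ZMod.natCast_eq_zero_iff 2 n).mp (by exact_mod_cast h)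
        exact this
      have := Nat.le_of_dvd (by norm_num) this
      omega
    have himg2 : Finset.univ.image (fun k : ZMod n => k ^ 2) = insert 0 Q := by
      ext b
      simp only [Finset.mem_image, Finset.mem_insert, Finset.mem_univ, true_and, hQ]
      constructor
      · rintro ⟨k, rfl⟩
        by_cases hk : k ^ 2 = 0
        · exact Or.inl hk
        · exact Or.inr ⟨hk, k, rfl⟩
      · rintro (rfl | ⟨hb, k, rfl⟩)
        · exact ⟨0, by ring⟩
        · exact ⟨k, rfl⟩
    have hfib0 : (Finset.univ.filter (fun k : ZMod n => k ^ 2 = 0)).card = 1 := by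
      have : Finset.univ.filter (fun k : ZMod n => k ^ 2 = 0) = {0} := by
        ext k
        simp [pow_eq_zero_iff]
      rw [this, Finset.card_singleton]
    have hfib : ∀ b ∈ Q, (Finset.univ.filter (fun k : ZMod n => k ^ 2 = b)).card = 2 := by
      intro b hb
      obtain ⟨hb0, r, hr⟩ := (hQ b).mp hb
      have hr0 : r ≠ 0 := by rintro rfl; simp at hr; exact hb0 hr.symm
      have hrne : r ≠ -r := by
        intro h
        apply hr0
        have h2 : (2 : ZMod n) * r = 0 := by linear_combination h
        rcases mul_eq_zero.mp h2 with h | h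
        · exact absurd h h2ne
        · exact h
      have hset : Finset.univ.filter (fun k : ZMod n => k ^ 2 = b) = {r, -r} := by
        ext k
        simp only [Finset.mem_filter, Finset.mem_univ, true_and, Finset.mem_insert,
          Finset.mem_singleton]
        constructor
        · intro hk
          have : (k - r) * (k + r) = 0 := by
            have : k ^ 2 - r ^ 2 = 0 := by rw [hk, hr]; ring
            linear_combination this
          rcases mul_eq_zero.mp this with h | h
          · left; linear_combination h
          · right; linear_combination h
        · rintro (rfl | rfl)
          · exact hr
          · rw [← hr]; ring
      rw [hset, Finset.card_insert_of_notMem (by simpa using hrne), Finset.card_singleton]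
    have hGx : G x = 1 + 2 * S x := by
      rw [hG' x, Finset.sum_comp (fun b => psi n (x * b)) (fun k : ZMod n => k ^ 2),
        himg2, Finset.sum_insert h0Q, hfib0]
      rw [Finset.sum_congr rfl (fun b hb => by rw [hfib b hb])]
      simp only [one_smul, mul_zero, psi_zero, smul_eq_mul, nsmul_eq_mul]
      rw [hSdef, Finset.mul_sum]
      push_cast
      ring
    -- strict bound (G x).re < n
    have hGlt : (G x).re < (n : ℝ) := by
      have hrw : G x = ∑ k ∈ Finset.range n, psi n (x * (k : ZMod n) ^ 2) := by
        rw [hG]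
        apply Finset.sum_congr rfl
        intro k _
        rw [psi_natCast]
        congr 1
        push_cast [ZMod.natCast_val, ZMod.cast_id]
        try ring
      rw [hrw, Complex.re_sum]
      have hbound : ∀ k ∈ Finset.range n, (psi n (x * (k : ZMod n) ^ 2)).re ≤ 1 := by
        intro k _
        exact (Complex.re_le_norm _).trans_eq (abs_psi n _)
      have hstrict : ∃ k ∈ Finset.range n, (psi n (x * (k : ZMod n) ^ 2)).re < 1 := by
        refine ⟨1, Finset.mem_range.mpr (by omega), ?_⟩
        apply re_lt_one_of_ne_one _ (abs_psi n _)
        have : x * ((1 : ℕ) : ZMod n) ^ 2 = x := by push_cast; ring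
        rw [this]
        exact psi_ne_one n x hx
      calc ∑ k ∈ Finset.range n, (psi n (x * (k : ZMod n) ^ 2)).re
          < ∑ _k ∈ Finset.range n, (1:ℝ) := Finset.sum_lt_sum hbound hstrict
        _ = (n : ℝ) := by simp
    have hSrelt : (S x).re < (Q.card : ℝ) := by
      have h1 : (G x).re = 1 + 2 * (S x).re := by
        rw [hGx]
        simp
      rw [hcard]
      nlinarith [hGlt]
    constructor
    · -- the formula
      have hcardC : (Q.card : ℂ) = ((n : ℂ) - 1) / 2 := by
        have h := congrArg (fun r : ℝ => (r : ℂ)) hcard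
        push_cast at h
        exact h
      have hn1 : ((n : ℂ) - 1) ≠ 0 := by
        intro h
        have : (n : ℂ) = 1 := by linear_combination h
        have : (n : ℕ) = 1 := by exact_mod_cast this
        omega
      have hQC : ((Q.card : ℕ) : ℂ) ≠ 0 := by
        rw [hcardC]
        intro h
        apply hn1
        have : ((n:ℂ) - 1) / 2 * 2 = 0 := by rw [h]; ring
        simpa using this
      rw [hlamc x, hGx, hc]
      push_cast
      rw [hcardC]
      field_simp
      ring
    constructor
    · rintro rfl
      have hcpos : 0 < c := by
        rw [hc]
        positivity
      have := mul_neg_of_pos_of_neg hcpos (sub_neg.mpr hSrelt)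
      simpa using this
    · rintro rfl
      have hcneg : c < 0 := by
        have h1 : (0:ℝ) < 2 * Real.pi / Q.card := by positivity
        have h2 : c = -(2 * Real.pi / Q.card) := by rw [hc]; ring
        rw [h2]
        linarith
      have := mul_pos_of_neg_of_neg hcneg (sub_neg.mpr hSrelt)
      simpa using this
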